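/- arXiv:2402.01479 — 4 statements merged into one kernel-verified Lean document; each statement's English description precedes it below -/
import Mathlib

section
/- Let (E,𝓑,μ) be a measure space with μ finite, let ψ : ℝ → [0,∞) be convex and lower semicontinuous with ψ(0)=0 satisfying lim_{|r|→∞} ψ(r)/|r| = +∞, and let ξ ≥ 0. If (vₙ)ₙ is a sequence of measurable functions with ∫_E ψ(vₙ) dμ ≤ ξ for all n, then there exist a strictly increasing subsequence (n_k) and a function v ∈ L¹(μ) such that v_{n_k} converges to v weakly in L¹(μ), i.e. for every bounded measurable u : E → ℝ one has ∫_E v_{n_k}·u dμ → ∫_E v·u dμ as k → ∞. -/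
open MeasureTheory Filter Topology
open scoped RealInnerProductSpace NNReal ENNReal

set_option maxHeartbeats 1000000

theorem hilbert_weak_seq_compact {H : Type*} [NormedAddCommGroup H]
    [InnerProductSpace ℝ H] [CompleteSpace H]
    (x : ℕ → ℕ → H) (C : ℕ → ℝ) (hC : ∀ m n, ‖x m n‖ ≤ C m) :
    ∃ φ : ℕ → ℕ, StrictMono φ ∧ ∃ w : ℕ → H,
      ∀ (m : ℕ) (y : H), Tendsto (fun k => ⟪x m (φ k), y⟫) atTop (𝓝 ⟪w m, y⟫) := by
  classical
  obtain ⟨q⟩ : Nonempty (ℕ × ℕ ≃ ℕ) := ⟨Denumerable.eqv (ℕ × ℕ)⟩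
  set e : ℕ → H := fun j => x (q.symm j).1 (q.symm j).2 with he
  have hxe : ∀ m n, x m n = e (q (m, n)) := by
    intro m n; simp [he]
  -- diagonal extraction
  set A : ℕ → (ℕ × ℕ) → ℝ := fun n p => ⟪x p.1 n, e p.2⟫ with hA
  set B : (ℕ × ℕ) → ℝ := fun p => C p.1 * ‖e p.2‖ with hB
  have hmem : ∀ n, A n ∈ Set.univ.pi fun p => Set.Icc (-(B p)) (B p) := by
    intro n p _
    have h1 : |A n p| ≤ B p := by
      refine le_trans (abs_real_inner_le_norm _ _) ?_
      exact mul_le_mul_of_nonneg_right (hC _ _) (norm_nonneg _)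
    exact abs_le.mp h1
  have hcomp : IsSeqCompact (Set.univ.pi fun p : ℕ × ℕ => Set.Icc (-(B p)) (B p)) :=
    (isCompact_univ_pi fun p => isCompact_Icc).isSeqCompact
  obtain ⟨L, _, φ, hφ, hLtend⟩ := hcomp hmem
  have hpt : ∀ m j, Tendsto (fun k => ⟪x m (φ k), e j⟫) atTop (𝓝 (L (m, j))) := by
    intro m j
    have := (tendsto_pi_nhds.mp hLtend) (m, j)
    simpa [hA, Function.comp] using this
  set S : Submodule ℝ H := (Submodule.span ℝ (Set.range e)).topologicalClosure with hS
  have hxS : ∀ m n, x m n ∈ S :=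
    fun m n => Submodule.le_topologicalClosure _ (Submodule.subset_span ⟨q (m, n), (hxe m n).symm⟩)
  haveI : CompleteSpace S :=
    (Submodule.isClosed_topologicalClosure _).completeSpace_coe
  have main : ∀ m, ∃ wm : H, ∀ y : H,
      Tendsto (fun k => ⟪x m (φ k), y⟫) atTop (𝓝 ⟪wm, y⟫) := by
    intro m
    have hc : 0 ≤ C m := le_trans (norm_nonneg _) (hC m 0)
    have conv_span : ∀ y ∈ Submodule.span ℝ (Set.range e),
        ∃ l : ℝ, Tendsto (fun k => ⟪x m (φ k), y⟫) atTop (𝓝 l) := by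
      intro y hy
      induction hy using Submodule.span_induction with
      | mem y hy => obtain ⟨j, rfl⟩ := hy; exact ⟨L (m, j), hpt m j⟩
      | zero => exact ⟨0, by simpa using tendsto_const_nhds⟩
      | add y z _ _ hy hz =>
          obtain ⟨ly, hy⟩ := hy; obtain ⟨lz, hz⟩ := hz
          exact ⟨ly + lz, by simpa [inner_add_right] using hy.add hz⟩
      | smul c y _ hy =>
          obtain ⟨ly, hy⟩ := hy
          exact ⟨c * ly, by simpa [real_inner_smul_right] using hy.const_mul c⟩
    have key : ∀ y ∈ S, ∃ l : ℝ, Tendsto (fun k => ⟪x m (φ k), y⟫) atTop (𝓝 l) := by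
      intro y hy
      refine cauchySeq_tendsto_of_complete ?_
      rw [Metric.cauchySeq_iff]
      intro ε hε
      have hy' : y ∈ closure (Submodule.span ℝ (Set.range e) : Set H) := hy
      have hε' : 0 < ε / (3 * (C m + 1)) := by positivity
      obtain ⟨z, hz_mem, hz⟩ := Metric.mem_closure_iff.mp hy' _ hε'
      obtain ⟨l, hl⟩ := conv_span z hz_mem
      have hgc := hl.cauchySeq
      rw [Metric.cauchySeq_iff] at hgc
      obtain ⟨N, hN⟩ := hgc (ε / 3) (by positivity)
      refine ⟨N, fun k hk l' hl' => ?_⟩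
      have hdiff : ∀ j : ℕ, |⟪x m (φ j), y⟫ - ⟪x m (φ j), z⟫| ≤ ε / 3 := by
        intro j
        have h1 : |⟪x m (φ j), y - z⟫| ≤ ‖x m (φ j)‖ * ‖y - z‖ :=
          abs_real_inner_le_norm _ _
        rw [inner_sub_right] at h1
        have h2 : ‖x m (φ j)‖ * ‖y - z‖ ≤ C m * (ε / (3 * (C m + 1))) := by
          have := hz
          rw [dist_eq_norm] at this
          exact mul_le_mul (hC _ _) this.le (norm_nonneg _) hc
        refine le_trans h1 (le_trans h2 ?_)
        calc C m * (ε / (3 * (C m + 1)))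
            ≤ (C m + 1) * (ε / (3 * (C m + 1))) :=
              mul_le_mul_of_nonneg_right (by linarith) (le_of_lt hε')
          _ = ε / 3 := by field_simp
      have tri : dist ⟪x m (φ k), y⟫ ⟪x m (φ l'), y⟫ ≤
          |⟪x m (φ k), y⟫ - ⟪x m (φ k), z⟫| +
          dist ⟪x m (φ k), z⟫ ⟪x m (φ l'), z⟫ +
          |⟪x m (φ l'), y⟫ - ⟪x m (φ l'), z⟫| := by
        rw [Real.dist_eq, Real.dist_eq]
        have := abs_sub_abs_le_abs_sub (⟪x m (φ k), y⟫) (⟪x m (φ l'), y⟫)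
        calc |⟪x m (φ k), y⟫ - ⟪x m (φ l'), y⟫|
            = |(⟪x m (φ k), y⟫ - ⟪x m (φ k), z⟫) + (⟪x m (φ k), z⟫ - ⟪x m (φ l'), z⟫)
              + (⟪x m (φ l'), z⟫ - ⟪x m (φ l'), y⟫)| := by ring_nf
          _ ≤ _ := by
              refine le_trans (abs_add_le _ _) ?_
              refine add_le_add (le_trans (abs_add_le _ _) ?_) ?_
              · exact add_le_add le_rfl le_rfl
              · rw [abs_sub_comm]
      have := hN k hk l' hl'
      calc dist ⟪x m (φ k), y⟫ ⟪x m (φ l'), y⟫ ≤ _ := tri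
        _ < ε / 3 + ε / 3 + ε / 3 := by
            have h1 := hdiff k; have h2 := hdiff l'; linarith
        _ = ε := by ring
    -- reduce arbitrary y to S via orthogonal projection
    have exLim : ∀ y : H, ∃ l : ℝ, Tendsto (fun k => ⟪x m (φ k), y⟫) atTop (𝓝 l) := by
      intro y
      have hproj : ∀ n : ℕ, ⟪x m n, y⟫ = ⟪x m n, (S.orthogonalProjectionOnto y : H)⟫ := by
        intro n
        have horth : y - (S.orthogonalProjectionOnto y : H) ∈ Sᗮ :=
          Submodule.sub_starProjection_mem_orthogonal y
        have h0 : ⟪x m n, y - (S.orthogonalProjectionOnto y : H)⟫ = 0 :=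
          horth (x m n) (hxS m n)
        rw [inner_sub_right] at h0
        linarith
      obtain ⟨l, hl⟩ := key (S.orthogonalProjectionOnto y : H) (SetLike.coe_mem _)
      exact ⟨l, by simpa only [hproj] using hl⟩
    -- build the limiting functional
    set g : H → ℝ := fun y => (exLim y).choose with hg
    have hgl : ∀ y : H, Tendsto (fun k => ⟪x m (φ k), y⟫) atTop (𝓝 (g y)) :=
      fun y => (exLim y).choose_spec
    have hadd : ∀ y z : H, g (y + z) = g y + g z := by
      intro y z
      refine tendsto_nhds_unique (hgl (y + z)) ?_
      simpa [inner_add_right] using (hgl y).add (hgl z)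
    have hsmul : ∀ (c : ℝ) (y : H), g (c • y) = c * g y := by
      intro c y
      refine tendsto_nhds_unique (hgl (c • y)) ?_
      simpa [real_inner_smul_right] using (hgl y).const_mul c
    have hbound : ∀ y : H, |g y| ≤ C m * ‖y‖ := by
      intro y
      refine le_of_tendsto (hgl y).abs ?_
      filter_upwards with k
      exact le_trans (abs_real_inner_le_norm _ _)
        (mul_le_mul_of_nonneg_right (hC _ _) (norm_nonneg _))
    set gL : H →ₗ[ℝ] ℝ :=
      { toFun := g, map_add' := hadd, map_smul' := hsmul } with hgL
    set gC : H →L[ℝ] ℝ := gL.mkContinuous (C m) (fun y => by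
      simpa [hgL, Real.norm_eq_abs] using hbound y) with hgC
    refine ⟨(InnerProductSpace.toDual ℝ H).symm gC, fun y => ?_⟩
    have : ⟪((InnerProductSpace.toDual ℝ H).symm gC : H), y⟫ = gC y :=
      InnerProductSpace.toDual_symm_apply
    rw [this]
    exact hgl y
  choose w hw using main
  exact ⟨φ, hφ, w, hw⟩



section Aux2

variable {α : Type*} [MeasurableSpace α] {μ : Measure α} [IsFiniteMeasure μ]

theorem L2_inner_eq (f g : Lp ℝ 2 μ) : ⟪f, g⟫ = ∫ x, f x * g x ∂μ := by
  rw [MeasureTheory.L2.inner_def]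
  simp [RCLike.inner_apply]
  exact integral_congr_ae (Eventually.of_forall fun x => mul_comm _ _)

theorem l1_bound_of_weak_limit (a : ℕ → Lp ℝ 2 μ) (f : Lp ℝ 2 μ) (c : ℝ)
    (hc : ∀ k, ∫ x, |(a k : α → ℝ) x| ∂μ ≤ c)
    (hwk : ∀ y : Lp ℝ 2 μ, Tendsto (fun k => ⟪a k, y⟫) atTop (𝓝 ⟪f, y⟫)) :
    ∫ x, |(f : α → ℝ) x| ∂μ ≤ c := by
  classical
  have hfm := (Lp.aestronglyMeasurable f)
  set g : α → ℝ := hfm.mk f with hgdef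
  have hg : StronglyMeasurable g := hfm.stronglyMeasurable_mk
  have hfg : (f : α → ℝ) =ᵐ[μ] g := hfm.ae_eq_mk
  set s : α → ℝ := fun x => if 0 ≤ g x then 1 else -1 with hsdef
  have hsm : Measurable s := Measurable.ite (measurableSet_le measurable_const hg.measurable)
    measurable_const measurable_const
  have hsb : ∀ x, ‖s x‖ ≤ 1 := by
    intro x; rw [Real.norm_eq_abs, hsdef]
    by_cases h : 0 ≤ g x <;> simp [h]
  have hmem_s : MemLp s 2 μ :=
    MemLp.of_bound hsm.aestronglyMeasurable 1 (ae_of_all _ hsb)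
  set y : Lp ℝ 2 μ := hmem_s.toLp s with hydef
  have hy : (y : α → ℝ) =ᵐ[μ] s := MemLp.coeFn_toLp _
  have int_a : ∀ k, Integrable (a k : α → ℝ) μ :=
    fun k => memLp_one_iff_integrable.mp ((Lp.memLp (a k)).mono_exponent (by norm_num))
  have int_f : Integrable (f : α → ℝ) μ :=
    memLp_one_iff_integrable.mp ((Lp.memLp f).mono_exponent (by norm_num))
  have key : ∀ k, ⟪a k, y⟫ ≤ c := by
    intro k
    have h1 : ⟪a k, y⟫ = ∫ x, (a k : α → ℝ) x * s x ∂μ := by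
      rw [L2_inner_eq]
      refine integral_congr_ae ?_
      filter_upwards [hy] with x hx
      rw [hx]
    rw [h1]
    refine le_trans (le_trans (integral_mono ?_ ((int_a k).abs) ?_) (hc k)) le_rfl
    · have := (int_a k).bdd_mul (c := 1) hsm.aestronglyMeasurable (ae_of_all _ hsb)
      simpa [mul_comm] using this
    · intro x
      calc (a k : α → ℝ) x * s x ≤ |(a k : α → ℝ) x * s x| := le_abs_self _
        _ = |(a k : α → ℝ) x| * |s x| := abs_mul _ _
        _ ≤ |(a k : α → ℝ) x| * 1 := by
            refine mul_le_mul_of_nonneg_left ?_ (abs_nonneg _)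
            simpa [Real.norm_eq_abs] using hsb x
        _ = |(a k : α → ℝ) x| := mul_one _
  have hfy : ⟪f, y⟫ = ∫ x, |(f : α → ℝ) x| ∂μ := by
    rw [L2_inner_eq]
    refine integral_congr_ae ?_
    filter_upwards [hy, hfg] with x hx hfx
    rw [hx, hfx, hsdef]
    by_cases h : 0 ≤ g x
    · simp [h, abs_of_nonneg h]
    · push_neg at h
      simp [h.not_ge, abs_of_neg h]
  rw [← hfy]
  exact le_of_tendsto (hwk y) (Eventually.of_forall key)

end Aux2



section Aux3

theorem trunc_cases (c r : ℝ) (hc : 0 < c) :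
    (|r| ≤ c ∧ max (-c) (min c r) = r) ∨ (c ≤ |r| ∧ |r - max (-c) (min c r)| ≤ |r|) := by
  rcases le_total r c with h1 | h1
  · rcases le_total (-c) r with h2 | h2
    · left
      exact ⟨abs_le.mpr ⟨h2, h1⟩, by rw [min_eq_right h1, max_eq_right h2]⟩
    · right
      constructor
      · rw [abs_of_nonpos (by linarith)]; linarith
      · rw [min_eq_right h1, max_eq_left h2, abs_of_nonpos (by linarith),
          abs_of_nonpos (by linarith)]
        linarith
  · right
    constructor
    · rw [abs_of_nonneg (by linarith)]; exact h1
    · rw [min_eq_left h1, max_eq_right (by linarith : -c ≤ c), abs_of_nonneg (by linarith),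
        abs_of_nonneg (by linarith)]
      linarith

end Aux3

/-- (Dunford–Pettis type compactness) A sequence with uniformly bounded energy
`∫ ψ(vₙ) dμ ≤ ξ` has a subsequence converging weakly in `L¹(μ)`. -/
theorem stmt_4 {E : Type*} [MeasurableSpace E] (μ : Measure E) [IsFiniteMeasure μ]
    (ψ : ℝ → ℝ) (hconv : ConvexOn ℝ Set.univ ψ) (hlsc : LowerSemicontinuous ψ)
    (hnonneg : ∀ r : ℝ, 0 ≤ ψ r) (hzero : ψ 0 = 0)
    (hsuper : ∀ M : ℝ, 0 < M → ∃ R : ℝ, 0 < R ∧ ∀ r : ℝ, R ≤ |r| → M * |r| ≤ ψ r)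
    (ξ : ℝ) (hξ : 0 ≤ ξ)
    (vs : ℕ → E → ℝ) (hmeas : ∀ n, Measurable (vs n))
    (hbound : ∀ n, ∫⁻ x, ENNReal.ofReal (ψ (vs n x)) ∂μ ≤ ENNReal.ofReal ξ) :
    ∃ φ : ℕ → ℕ, StrictMono φ ∧ ∃ v : E → ℝ, Integrable v μ ∧
      ∀ u : E → ℝ, Measurable u → (∃ M : ℝ, ∀ x, |u x| ≤ M) →
        Tendsto (fun k => ∫ x, vs (φ k) x * u x ∂μ) atTop
          (nhds (∫ x, v x * u x ∂μ)) := by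
  classical
  have hψc : Continuous ψ := continuousOn_univ.mp (hconv.continuousOn isOpen_univ)
  -- integrability of ψ ∘ vs n, and the energy bound as a real integral
  have hψint : ∀ n, Integrable (fun x => ψ (vs n x)) μ := by
    intro n
    refine ⟨(hψc.measurable.comp (hmeas n)).aestronglyMeasurable, ?_⟩
    rw [hasFiniteIntegral_iff_norm]
    have : ∀ x, ENNReal.ofReal ‖ψ (vs n x)‖ = ENNReal.ofReal (ψ (vs n x)) := by
      intro x; rw [Real.norm_eq_abs, abs_of_nonneg (hnonneg _)]
    simp_rw [this]
    exact lt_of_le_of_lt (hbound n) ENNReal.ofReal_lt_top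
  have hψle : ∀ n, ∫ x, ψ (vs n x) ∂μ ≤ ξ := by
    intro n
    rw [integral_eq_lintegral_of_nonneg_ae (ae_of_all _ fun x => hnonneg _)
      (hψc.measurable.comp (hmeas n)).aestronglyMeasurable]
    calc (∫⁻ x, ENNReal.ofReal (ψ (vs n x)) ∂μ).toReal
        ≤ (ENNReal.ofReal ξ).toReal := ENNReal.toReal_mono ENNReal.ofReal_ne_top (hbound n)
      _ = ξ := ENNReal.toReal_ofReal hξ
  -- integrability of vs n
  obtain ⟨R₁, hR₁pos, hR₁⟩ := hsuper 1 one_pos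
  have int_vs : ∀ n, Integrable (vs n) μ := by
    intro n
    have h1 : ∀ x, |vs n x| ≤ R₁ + ψ (vs n x) := by
      intro x
      rcases le_or_gt (|vs n x|) R₁ with h | h
      · linarith [hnonneg (vs n x)]
      · have h2 := hR₁ _ h.le
        rw [one_mul] at h2
        linarith
    refine Integrable.mono' ((integrable_const R₁).add (hψint n))
      (hmeas n).aestronglyMeasurable (ae_of_all _ fun x => ?_)
    rw [Real.norm_eq_abs]
    exact h1 x
  -- truncation levels from superlinearity
  have hRs : ∀ j : ℕ, ∃ R : ℝ, 0 < R ∧ ∀ r : ℝ, R ≤ |r| → ((j : ℝ) + 1) * |r| ≤ ψ r :=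
    fun j => hsuper _ (by positivity)
  choose c hcpos hcsup using hRs
  set trunc : ℕ → ℕ → E → ℝ := fun j n x => max (-(c j)) (min (c j) (vs n x)) with htr
  have htmeas : ∀ j n, Measurable (trunc j n) :=
    fun j n => measurable_const.max (measurable_const.min (hmeas n))
  have htbdd : ∀ j n x, |trunc j n x| ≤ c j := by
    intro j n x
    refine abs_le.mpr ⟨le_max_left _ _, max_le (by linarith [hcpos j]) (min_le_left _ _)⟩
  have hdiffb : ∀ (j n : ℕ) (x : E), ((j : ℝ) + 1) * |vs n x - trunc j n x| ≤ ψ (vs n x) := by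
    intro j n x
    rcases trunc_cases (c j) (vs n x) (hcpos j) with ⟨h1, h2⟩ | ⟨h1, h2⟩
    · have : trunc j n x = vs n x := h2
      rw [this, sub_self, abs_zero, mul_zero]
      exact hnonneg _
    · calc ((j : ℝ) + 1) * |vs n x - trunc j n x| ≤ ((j : ℝ) + 1) * |vs n x| :=
          mul_le_mul_of_nonneg_left h2 (by positivity)
        _ ≤ ψ (vs n x) := hcsup j _ h1
  have int_trunc : ∀ j n, Integrable (trunc j n) μ := by
    intro j n
    refine Integrable.mono' (integrable_const (c j)) (htmeas j n).aestronglyMeasurable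
      (ae_of_all _ fun x => ?_)
    rw [Real.norm_eq_abs]; exact htbdd j n x
  set δ : ℕ → ℝ := fun j => ξ / ((j : ℝ) + 1) with hδ
  have hδnn : ∀ j, 0 ≤ δ j := fun j => div_nonneg hξ (by positivity)
  have hδ0 : Tendsto δ atTop (𝓝 0) := by
    have h1 : Tendsto (fun j : ℕ => 1 / ((j : ℝ) + 1)) atTop (𝓝 0) :=
      tendsto_one_div_add_atTop_nhds_zero_nat
    have h2 := h1.const_mul ξ
    rw [mul_zero] at h2
    refine h2.congr fun j => ?_
    rw [hδ]; field_simp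
  -- key uniform-integrability estimate
  have est : ∀ j n, ∫ x, |vs n x - trunc j n x| ∂μ ≤ δ j := by
    intro j n
    have int_d : Integrable (fun x => |vs n x - trunc j n x|) μ :=
      ((int_vs n).sub (int_trunc j n)).abs
    have h1 : ((j : ℝ) + 1) * ∫ x, |vs n x - trunc j n x| ∂μ ≤ ξ := by
      rw [← integral_const_mul]
      refine le_trans (integral_mono (int_d.const_mul _) (hψint n) fun x => hdiffb j n x)
        (hψle n)
    have hpos : (0:ℝ) < (j : ℝ) + 1 := by positivity
    simp only [hδ]
    rw [le_div_iff₀ hpos]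
    linarith
  -- L² members and the weak compactness argument
  have hmem2 : ∀ j n, MemLp (trunc j n) 2 μ := fun j n =>
    MemLp.of_bound (htmeas j n).aestronglyMeasurable (c j)
      (ae_of_all _ fun x => by rw [Real.norm_eq_abs]; exact htbdd j n x)
  set X : ℕ → ℕ → Lp ℝ 2 μ := fun j n => (hmem2 j n).toLp _ with hX
  have hXcoe : ∀ j n, (X j n : E → ℝ) =ᵐ[μ] trunc j n := fun j n => MemLp.coeFn_toLp _
  have hXnorm : ∀ j n, ‖X j n‖ ≤ (measureUnivNNReal μ : ℝ) ^ ((2:ℝ≥0∞).toReal)⁻¹ * c j := by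
    intro j n
    refine Lp.norm_le_of_ae_bound (le_of_lt (hcpos j)) ?_
    filter_upwards [hXcoe j n] with x hx
    rw [hx, Real.norm_eq_abs]
    exact htbdd j n x
  obtain ⟨φ, hφ, w, hw⟩ := hilbert_weak_seq_compact X _ hXnorm
  -- pass the weak limits to L¹
  have int_w : ∀ j, Integrable (⇑(w j)) μ :=
    fun j => memLp_one_iff_integrable.mp ((Lp.memLp (w j)).mono_exponent (by norm_num))
  have hmemw1 : ∀ j, MemLp (⇑(w j)) 1 μ :=
    fun j => (Lp.memLp (w j)).mono_exponent (by norm_num)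
  set W : ℕ → Lp ℝ 1 μ := fun j => (hmemw1 j).toLp _ with hWdef
  have hWcoe : ∀ j, (W j : E → ℝ) =ᵐ[μ] ⇑(w j) := fun j => MemLp.coeFn_toLp _
  have est2 : ∀ j j' n, ∫ x, |trunc j n x - trunc j' n x| ∂μ ≤ δ j + δ j' := by
    intro j j' n
    have h1 : ∀ x, |trunc j n x - trunc j' n x|
        ≤ |vs n x - trunc j n x| + |vs n x - trunc j' n x| := by
      intro x
      have h2 : trunc j n x - trunc j' n x
          = (vs n x - trunc j' n x) - (vs n x - trunc j n x) := by ring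
      have h3 := abs_add_le (trunc j n x - vs n x) (vs n x - trunc j' n x)
      have h4 : trunc j n x - vs n x + (vs n x - trunc j' n x)
          = trunc j n x - trunc j' n x := by ring
      rw [h4, abs_sub_comm (trunc j n x) (vs n x)] at h3
      linarith
    calc ∫ x, |trunc j n x - trunc j' n x| ∂μ
        ≤ ∫ x, (|vs n x - trunc j n x| + |vs n x - trunc j' n x|) ∂μ :=
          integral_mono (((int_trunc j n).sub (int_trunc j' n)).abs)
            ((((int_vs n).sub (int_trunc j n)).abs).add
              (((int_vs n).sub (int_trunc j' n)).abs)) h1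
      _ = (∫ x, |vs n x - trunc j n x| ∂μ) + ∫ x, |vs n x - trunc j' n x| ∂μ :=
          integral_add (((int_vs n).sub (int_trunc j n)).abs)
            (((int_vs n).sub (int_trunc j' n)).abs)
      _ ≤ δ j + δ j' := add_le_add (est j n) (est j' n)
  have hWd : ∀ j j', ‖W j - W j'‖ ≤ δ j + δ j' := by
    intro j j'
    rw [L1.norm_eq_integral_norm]
    have heq : ∫ x, ‖(W j - W j') x‖ ∂μ = ∫ x, |(⇑(w j - w j') : E → ℝ) x| ∂μ := by
      refine integral_congr_ae ?_
      filter_upwards [Lp.coeFn_sub (W j) (W j'), hWcoe j, hWcoe j',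
        Lp.coeFn_sub (w j) (w j')] with x h1 h2 h3 h4
      rw [Real.norm_eq_abs, h1, h4]
      simp [h2, h3]
    rw [heq]
    refine l1_bound_of_weak_limit (fun k => X j (φ k) - X j' (φ k)) (w j - w j') _ ?_ ?_
    · intro k
      have hae : (⇑(X j (φ k) - X j' (φ k)) : E → ℝ)
          =ᵐ[μ] fun x => trunc j (φ k) x - trunc j' (φ k) x := by
        filter_upwards [Lp.coeFn_sub (X j (φ k)) (X j' (φ k)), hXcoe j (φ k),
          hXcoe j' (φ k)] with x h1 h2 h3
        rw [h1]; simp [h2, h3]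
      calc ∫ x, |(⇑(X j (φ k) - X j' (φ k)) : E → ℝ) x| ∂μ
          = ∫ x, |trunc j (φ k) x - trunc j' (φ k) x| ∂μ :=
            integral_congr_ae (by filter_upwards [hae] with x hx; rw [hx])
        _ ≤ δ j + δ j' := est2 j j' (φ k)
    · intro y
      have h1 := (hw j y).sub (hw j' y)
      simpa [inner_sub_left] using h1
  have hWc : CauchySeq W := by
    rw [Metric.cauchySeq_iff']
    intro ε hε
    obtain ⟨N, hN⟩ := eventually_atTop.mp (hδ0.eventually_lt_const (by linarith : (0:ℝ) < ε/2))
    refine ⟨N, fun n hn => ?_⟩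
    rw [dist_eq_norm]
    have h2 : δ n ≤ δ N := by
      simp only [hδ]
      gcongr <;> first
        | exact hξ
        | exact_mod_cast hn
    calc ‖W n - W N‖ ≤ δ n + δ N := hWd n N
      _ ≤ δ N + δ N := by linarith
      _ < ε := by have := hN N le_rfl; linarith
  obtain ⟨V, hV⟩ := cauchySeq_tendsto_of_complete hWc
  have int_V : Integrable (⇑V) μ := L1.integrable_coeFn V
  have hVW : ∀ j, ‖V - W j‖ ≤ δ j := by
    intro j
    have h1 : Tendsto (fun j' => ‖W j' - W j‖) atTop (𝓝 ‖V - W j‖) :=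
      ((hV.sub_const (W j)).norm)
    have h2 : Tendsto (fun j' => δ j' + δ j) atTop (𝓝 (0 + δ j)) := hδ0.add_const (δ j)
    have h3 := le_of_tendsto_of_tendsto' h1 h2 (fun j' => hWd j' j)
    rwa [zero_add] at h3
  refine ⟨φ, hφ, ⇑V, int_V, ?_⟩
  intro u hu hub
  obtain ⟨M₀, hM₀⟩ := hub
  set M : ℝ := max M₀ 0 with hMdef
  have hMnn : 0 ≤ M := le_max_right _ _
  have hMb : ∀ x, |u x| ≤ M := fun x => le_trans (hM₀ x) (le_max_left _ _)
  have hmemu : MemLp u 2 μ := MemLp.of_bound hu.aestronglyMeasurable M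
    (ae_of_all _ fun x => by rw [Real.norm_eq_abs]; exact hMb x)
  set U : Lp ℝ 2 μ := hmemu.toLp u with hUdef
  have hUcoe : (U : E → ℝ) =ᵐ[μ] u := MemLp.coeFn_toLp _
  have int_u_mul : ∀ (f : E → ℝ), Integrable f μ → Integrable (fun x => f x * u x) μ := by
    intro f hf
    have h1 := hf.bdd_mul (c := M) hu.aestronglyMeasurable
      (ae_of_all _ fun x => by rw [Real.norm_eq_abs]; exact hMb x)
    simpa [mul_comm] using h1
  have hinner_w : ∀ j, ⟪w j, U⟫ = ∫ x, w j x * u x ∂μ := by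
    intro j
    rw [L2_inner_eq]
    refine integral_congr_ae ?_
    filter_upwards [hUcoe] with x hx
    rw [hx]
  have hinner_X : ∀ j n, ⟪X j n, U⟫ = ∫ x, trunc j n x * u x ∂μ := by
    intro j n
    rw [L2_inner_eq]
    refine integral_congr_ae ?_
    filter_upwards [hUcoe, hXcoe j n] with x hx hx2
    rw [hx, hx2]
  have bound_gen : ∀ (d : ℝ) (f g : E → ℝ), Integrable f μ → Integrable g μ →
      (∫ x, |f x - g x| ∂μ ≤ d) → |(∫ x, f x * u x ∂μ) - ∫ x, g x * u x ∂μ| ≤ M * d := by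
    intro d f g hf hg hd
    rw [← integral_sub (int_u_mul f hf) (int_u_mul g hg)]
    have heq : ∀ x, f x * u x - g x * u x = (f x - g x) * u x := fun x => by ring
    simp_rw [heq]
    calc |∫ x, (f x - g x) * u x ∂μ|
        ≤ ∫ x, |(f x - g x) * u x| ∂μ := by
          have h6 := norm_integral_le_integral_norm (μ := μ) (fun x => (f x - g x) * u x)
          simp only [Real.norm_eq_abs] at h6
          exact h6
      _ ≤ ∫ x, |f x - g x| * M ∂μ := by
          refine integral_mono (int_u_mul _ (hf.sub hg)).abs
            (((hf.sub hg).abs).mul_const M) fun x => ?_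
          rw [abs_mul]
          exact mul_le_mul_of_nonneg_left (hMb x) (abs_nonneg _)
      _ = (∫ x, |f x - g x| ∂μ) * M := integral_mul_const M _
      _ ≤ d * M := by
          refine mul_le_mul_of_nonneg_right hd hMnn
      _ = M * d := mul_comm _ _
  have intwv : ∀ j, ∫ x, |w j x - V x| ∂μ ≤ δ j := by
    intro j
    have heq : ∫ x, |w j x - V x| ∂μ = ‖W j - V‖ := by
      rw [L1.norm_eq_integral_norm]
      refine (integral_congr_ae ?_).symm
      filter_upwards [Lp.coeFn_sub (W j) V, hWcoe j] with x h1 h2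
      rw [Real.norm_eq_abs, h1]
      simp [h2]
    rw [heq, norm_sub_rev]
    exact hVW j
  rw [Metric.tendsto_atTop]
  intro ε hε
  have h4 : Tendsto (fun j => M * δ j) atTop (𝓝 0) := by
    simpa using hδ0.const_mul M
  obtain ⟨j, hj⟩ := (h4.eventually_lt_const (by linarith : (0:ℝ) < ε/4)).exists
  have hmid := hw j U
  rw [Metric.tendsto_atTop] at hmid
  obtain ⟨K, hK⟩ := hmid (ε/4) (by linarith)
  refine ⟨K, fun k hk => ?_⟩
  rw [Real.dist_eq]
  have hsplit : (∫ x, vs (φ k) x * u x ∂μ) - ∫ x, V x * u x ∂μ =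
      ((∫ x, vs (φ k) x * u x ∂μ) - ∫ x, trunc j (φ k) x * u x ∂μ)
      + ((∫ x, trunc j (φ k) x * u x ∂μ) - ∫ x, w j x * u x ∂μ)
      + ((∫ x, w j x * u x ∂μ) - ∫ x, V x * u x ∂μ) := by ring
  rw [hsplit]
  have hb1 : |(∫ x, vs (φ k) x * u x ∂μ) - ∫ x, trunc j (φ k) x * u x ∂μ| ≤ M * δ j := by
    refine bound_gen (δ j) _ _ (int_vs (φ k)) (int_trunc j (φ k)) (est j (φ k))
  have hb3 : |(∫ x, w j x * u x ∂μ) - ∫ x, V x * u x ∂μ| ≤ M * δ j :=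
    bound_gen (δ j) _ _ (int_w j) int_V (intwv j)
  have hb2 : |(∫ x, trunc j (φ k) x * u x ∂μ) - ∫ x, w j x * u x ∂μ| < ε/4 := by
    have h5 := hK k hk
    rw [Real.dist_eq, hinner_X j (φ k), hinner_w j] at h5
    exact h5
  have habs1 := abs_add_le ((∫ x, vs (φ k) x * u x ∂μ) - ∫ x, trunc j (φ k) x * u x ∂μ)
    ((∫ x, trunc j (φ k) x * u x ∂μ) - ∫ x, w j x * u x ∂μ)
  have habs2 := abs_add_le (((∫ x, vs (φ k) x * u x ∂μ) - ∫ x, trunc j (φ k) x * u x ∂μ)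
      + ((∫ x, trunc j (φ k) x * u x ∂μ) - ∫ x, w j x * u x ∂μ))
    ((∫ x, w j x * u x ∂μ) - ∫ x, V x * u x ∂μ)
  linarith
end

section
/- Let (E,𝓑,μ) be a measure space with μ finite and let ψ : ℝ → [0,∞) be convex and lower semicontinuous with ψ(0)=0. If (vₙ)ₙ ⊆ L¹(μ) converges to v ∈ L¹(μ) weakly in L¹(μ) (i.e. ∫_E vₙ·u dμ → ∫_E v·u dμ for every bounded measurable u : E → ℝ), then ∫_E ψ(v) dμ ≤ liminf_{n→∞} ∫_E ψ(vₙ) dμ. -/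
open MeasureTheory Filter Set
open scoped ENNReal

lemma affine_minorant_family (ψ : ℝ → ℝ) (hconv : ConvexOn ℝ Set.univ ψ)
    (hlsc : LowerSemicontinuous ψ) (hnonneg : ∀ r : ℝ, 0 ≤ ψ r) :
    ∃ a b : ℕ → ℝ, a 0 = 0 ∧ b 0 = 0 ∧ (∀ n r, a n * r + b n ≤ ψ r) ∧
      ∀ r ε : ℝ, 0 < ε → ∃ n, ψ r - ε < a n * r + b n := by
  set S : ℝ → ℝ → ℝ := fun p q => (ψ q - ψ p) / (q - p) with hS
  have hmono : ∀ p q t : ℝ, p < q → q < t → S p q ≤ S q t := fun p q t h1 h2 =>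
    hconv.slope_mono_adjacent (mem_univ _) (mem_univ _) h1 h2
  set c : ℚ → ℝ := fun q => sSup ((fun p => S p (q : ℝ)) '' Iio (q : ℝ)) with hc
  have hne : ∀ q : ℚ, ((fun p => S p (q : ℝ)) '' Iio (q : ℝ)).Nonempty :=
    fun q => ⟨S ((q : ℝ) - 1) q, ⟨(q : ℝ) - 1, by simp, rfl⟩⟩
  have hbdd : ∀ q : ℚ, BddAbove ((fun p => S p (q : ℝ)) '' Iio (q : ℝ)) := by
    intro q
    refine ⟨S (q : ℝ) ((q : ℝ) + 1), ?_⟩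
    rintro y ⟨p, hp, rfl⟩
    exact hmono p q ((q : ℝ) + 1) hp (lt_add_one _)
  have hminor : ∀ (q : ℚ) (r : ℝ), c q * (r - q) + ψ q ≤ ψ r := by
    intro q r
    rcases lt_trichotomy r (q : ℝ) with hr | hr | hr
    · have h1 : S r (q : ℝ) ≤ c q := le_csSup (hbdd q) ⟨r, hr, rfl⟩
      have h2 : ψ q - ψ r ≤ c q * ((q : ℝ) - r) := by
        rw [hS] at h1
        exact (div_le_iff₀ (by linarith)).mp h1
      nlinarith [h2]
    · rw [hr]; simp
    · have h1 : c q ≤ S (q : ℝ) r := by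
        refine csSup_le (hne q) ?_
        rintro y ⟨p, hp, rfl⟩
        exact hmono p q r hp hr
      have h2 : c q * (r - (q : ℝ)) ≤ ψ r - ψ q := by
        rw [hS] at h1
        exact (le_div_iff₀ (by linarith)).mp h1
      linarith
  have happrox : ∀ r ε : ℝ, 0 < ε → ∃ q : ℚ, ψ r - ε < c q * (r - q) + ψ q := by
    intro r ε hε
    set M : ℝ := max (ψ (r - 2)) (ψ r) with hM
    have hM0 : 0 ≤ M := le_trans (hnonneg r) (le_max_right _ _)
    have hMb : ∀ t : ℝ, r - 2 ≤ t → t ≤ r → ψ t ≤ M := by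
      intro t h1 h2
      exact hconv.le_on_segment (mem_univ (r - 2)) (mem_univ r)
        (by rw [segment_eq_Icc (by linarith : r - 2 ≤ r)]; exact ⟨h1, h2⟩)
    obtain ⟨δ', hδ', hball⟩ := Metric.eventually_nhds_iff.mp (hlsc r (ψ r - ε / 2) (by linarith))
    set δ : ℝ := min δ' (min 1 (ε / (2 * (M + 1)))) with hδdef
    have hδpos : 0 < δ := by
      refine lt_min hδ' (lt_min one_pos ?_)
      positivity
    obtain ⟨q, hq1, hq2⟩ := exists_rat_btwn (show r - δ < r by linarith)
    refine ⟨q, ?_⟩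
    have hdist : dist (q : ℝ) r < δ' := by
      rw [Real.dist_eq, abs_sub_comm, abs_of_pos (by linarith : (0:ℝ) < r - q)]
      have : δ ≤ δ' := min_le_left _ _
      linarith
    have hψq : ψ r - ε / 2 < ψ (q : ℝ) := hball hdist
    have hδ1 : δ ≤ 1 := le_trans (min_le_right _ _) (min_le_left _ _)
    have hδε : δ ≤ ε / (2 * (M + 1)) := le_trans (min_le_right _ _) (min_le_right _ _)
    have hcq : -M ≤ c q := by
      have h1 : S ((q : ℝ) - 1) (q : ℝ) ≤ c q :=
        le_csSup (hbdd q) ⟨(q : ℝ) - 1, by simp, rfl⟩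
      have h2 : S ((q : ℝ) - 1) (q : ℝ) = ψ (q : ℝ) - ψ ((q : ℝ) - 1) := by
        rw [hS]; norm_num
      have h3 : ψ ((q : ℝ) - 1) ≤ M := hMb _ (by linarith) (by linarith)
      have h4 := hnonneg (q : ℝ)
      linarith
    have hrq0 : (0:ℝ) ≤ r - q := by linarith
    have h5 : -M * (r - q) ≤ c q * (r - q) := mul_le_mul_of_nonneg_right hcq hrq0
    have h6 : M * (r - q) ≤ ε / 2 := by
      have h7 : (r : ℝ) - q ≤ ε / (2 * (M + 1)) := by linarith
      have h8 : (M + 1) * (ε / (2 * (M + 1))) = ε / 2 := by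
        field_simp
      nlinarith
    linarith
  set e : ℕ → ℚ := fun n => (Denumerable.eqv ℚ).symm n with he
  refine ⟨fun n => Nat.casesOn n 0 (fun m => c (e m)),
    fun n => Nat.casesOn n 0 (fun m => ψ (e m) - c (e m) * (e m)), rfl, rfl, ?_, ?_⟩
  · rintro (_ | m) r
    · simpa using hnonneg r
    · have := hminor (e m) r
      simp only []
      nlinarith [this]
  · intro r ε hε
    obtain ⟨q, hq⟩ := happrox r ε hε
    refine ⟨(Denumerable.eqv ℚ) q + 1, ?_⟩
    have : e ((Denumerable.eqv ℚ) q) = q := by simp [he]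
    simp only [this]
    nlinarith [hq]

lemma ofReal_integral_le_lint {α : Type*} [MeasurableSpace α] (ν : Measure α) (f : α → ℝ)
    (hf : Integrable f ν) :
    ENNReal.ofReal (∫ x, f x ∂ν) ≤ ∫⁻ x, ENNReal.ofReal (f x) ∂ν := by
  have h1 : ∫ x, f x ∂ν ≤ ∫ x, max (f x) 0 ∂ν :=
    integral_mono hf hf.pos_part (fun x => le_max_left _ _)
  calc ENNReal.ofReal (∫ x, f x ∂ν) ≤ ENNReal.ofReal (∫ x, max (f x) 0 ∂ν) :=
        ENNReal.ofReal_le_ofReal h1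
    _ = ∫⁻ x, ENNReal.ofReal (max (f x) 0) ∂ν :=
        ofReal_integral_eq_lintegral_ofReal hf.pos_part (ae_of_all _ fun x => le_max_right _ _)
    _ = ∫⁻ x, ENNReal.ofReal (f x) ∂ν := by
        refine lintegral_congr fun x => ?_
        rcases le_total 0 (f x) with h | h
        · rw [max_eq_left h]
        · rw [max_eq_right h, ENNReal.ofReal_of_nonpos h, ENNReal.ofReal_zero]

/-- The energy functional `v ↦ ∫ ψ(v) dμ` is lower semicontinuous along sequences
converging weakly in `L¹(μ)`. -/
theorem stmt_5 {E : Type*} [MeasurableSpace E] (μ : Measure E) [IsFiniteMeasure μ]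
    (ψ : ℝ → ℝ) (hconv : ConvexOn ℝ Set.univ ψ) (hlsc : LowerSemicontinuous ψ)
    (hnonneg : ∀ r : ℝ, 0 ≤ ψ r) (hzero : ψ 0 = 0)
    (vs : ℕ → E → ℝ) (v : E → ℝ)
    (hvs : ∀ n, Integrable (vs n) μ) (hv : Integrable v μ)
    (hweak : ∀ u : E → ℝ, Measurable u → (∃ M : ℝ, ∀ x, |u x| ≤ M) →
      Tendsto (fun n => ∫ x, vs n x * u x ∂μ) atTop (nhds (∫ x, v x * u x ∂μ))) :
    ∫⁻ x, ENNReal.ofReal (ψ (v x)) ∂μ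
      ≤ liminf (fun n => ∫⁻ x, ENNReal.ofReal (ψ (vs n x)) ∂μ) atTop := by
  classical
  obtain ⟨a, b, ha0, hb0, hmin, happ⟩ := affine_minorant_family ψ hconv hlsc hnonneg
  obtain ⟨v', hv'm, hvv'⟩ := hv.1.aemeasurable
  have hv'int : Integrable v' μ := hv.congr hvv'
  set g : ℕ → ℝ → ℝ := fun j r => a j * r + b j with hg
  set F : ℕ → E → ℝ := fun N x =>
    Nat.rec (motive := fun _ => ℝ) (g 0 (v' x)) (fun m fm => max fm (g (m + 1) (v' x))) N with hF
  have hFsucc : ∀ (N : ℕ) (x : E), F (N + 1) x = max (F N x) (g (N + 1) (v' x)) := fun N x => rfl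
  have hgmeas : ∀ j, Measurable (fun x => g j (v' x)) := fun j =>
    (hv'm.const_mul (a j)).add_const (b j)
  have hFmeas : ∀ N, Measurable (F N) := by
    intro N
    induction N with
    | zero => exact hgmeas 0
    | succ m ih => exact ih.max (hgmeas (m + 1))
  have hFmono : ∀ x, Monotone fun N => F N x := fun x =>
    monotone_nat_of_le_succ fun N => le_max_left _ _
  have hFle : ∀ N x, F N x ≤ ψ (v' x) := by
    intro N x
    induction N with
    | zero => exact hmin 0 (v' x)
    | succ m ih => exact max_le ih (hmin (m + 1) (v' x))
  have hFge : ∀ N j, j ≤ N → ∀ x, g j (v' x) ≤ F N x := by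
    intro N
    induction N with
    | zero =>
      intro j hj x
      have : j = 0 := Nat.le_zero.mp hj
      subst this
      exact le_refl _
    | succ m ih =>
      intro j hj x
      rcases eq_or_lt_of_le hj with h | h
      · rw [h, hFsucc]; exact le_max_right _ _
      · rw [hFsucc]
        exact (ih j (Nat.lt_succ_iff.mp h) x).trans (le_max_left _ _)
  have hF0le : ∀ N x, (0 : ℝ) ≤ F N x := fun N x => by
    have := hFge N 0 (Nat.zero_le N) x
    simpa [hg, ha0, hb0] using this
  have hFattain : ∀ N x, ∃ j, j ≤ N ∧ F N x = g j (v' x) := by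
    intro N x
    induction N with
    | zero => exact ⟨0, le_refl 0, rfl⟩
    | succ m ih =>
      rcases ih with ⟨j, hj, hjx⟩
      rcases le_total (F m x) (g (m + 1) (v' x)) with h | h
      · exact ⟨m + 1, le_refl _, by rw [hFsucc, max_eq_right h]⟩
      · exact ⟨j, hj.trans (Nat.le_succ m), by rw [hFsucc, max_eq_left h, hjx]⟩
  have hFtend : ∀ x, Tendsto (fun N => F N x) atTop (nhds (ψ (v' x))) := by
    intro x
    have hbdd : BddAbove (range fun N => F N x) :=
      ⟨ψ (v' x), by rintro y ⟨N, rfl⟩; exact hFle N x⟩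
    have h1 := tendsto_atTop_ciSup (hFmono x) hbdd
    have h2 : ⨆ N, F N x = ψ (v' x) := by
      refine le_antisymm (ciSup_le fun N => hFle N x) ?_
      refine le_of_forall_pos_le_add fun ε hε => ?_
      obtain ⟨n, hn⟩ := happ (v' x) ε hε
      have h3 : ψ (v' x) - ε < F n x := lt_of_lt_of_le hn (hFge n n le_rfl x)
      have h4 : F n x ≤ ⨆ N, F N x := le_ciSup hbdd n
      linarith
    rwa [h2] at h1
  have hkey : ∀ N : ℕ, ∫⁻ x, ENNReal.ofReal (F N x) ∂μ
      ≤ liminf (fun n => ∫⁻ x, ENNReal.ofReal (ψ (vs n x)) ∂μ) atTop := by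
    intro N
    have hex : ∀ x : E, ∃ j, F N x = g j (v' x) := fun x => (hFattain N x).imp fun j h => h.2
    set J : E → ℕ := fun x => Nat.find (hex x) with hJ
    have hJspec : ∀ x, F N x = g (J x) (v' x) := fun x => Nat.find_spec (hex x)
    have hJle : ∀ x, J x ≤ N := by
      intro x
      obtain ⟨j, hj, hjx⟩ := hFattain N x
      exact (Nat.find_min' (hex x) hjx).trans hj
    set B : ℕ → Set E := fun j => J ⁻¹' {j} with hB
    have hBmem : ∀ (j : ℕ) (x : E), x ∈ B j ↔ J x = j := by
      intro j x
      simp [hB]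
    have hBmeas : ∀ j, MeasurableSet (B j) := by
      intro j
      have heq : B j = {x | F N x = g j (v' x)}
          ∩ ⋂ i ∈ Finset.range j, {x | F N x = g i (v' x)}ᶜ := by
        ext x
        simp only [hBmem, mem_inter_iff, mem_setOf_eq, mem_iInter, Finset.mem_range,
          mem_compl_iff]
        constructor
        · rintro rfl
          exact ⟨hJspec x, fun i hi => Nat.find_min (hex x) hi⟩
        · rintro ⟨h1, h2⟩
          exact (Nat.find_eq_iff (hex x)).mpr ⟨h1, fun i hi => h2 i hi⟩
      rw [heq]
      have hm : ∀ i : ℕ, MeasurableSet {x : E | F N x = g i (v' x)} := fun i =>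
        measurableSet_eq_fun (hFmeas N) (hgmeas i)
      exact (hm j).inter
        (MeasurableSet.biInter (Finset.range j).countable_toSet fun i _ => (hm i).compl)
    have hdisj : Pairwise (Function.onFun Disjoint B) := by
      intro i j hij
      refine Set.disjoint_left.mpr fun x hxi hxj => hij ?_
      rw [← (hBmem i x).mp hxi, ← (hBmem j x).mp hxj]
    have hBunion : ⋃ j, B j = univ := by
      ext x
      simp only [mem_iUnion, mem_univ, iff_true]
      exact ⟨J x, (hBmem _ x).mpr rfl⟩
    have hBempty : ∀ j, N < j → B j = ∅ := by
      intro j hj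
      ext x
      simp only [hBmem, mem_empty_iff_false, iff_false]
      intro h
      exact absurd (h ▸ hJle x) (not_le.mpr hj)
    have hpart : ∀ f : E → ℝ≥0∞, ∫⁻ x, f x ∂μ = ∑' j, ∫⁻ x in B j, f x ∂μ := by
      intro f
      rw [← lintegral_iUnion hBmeas hdisj f, hBunion, Measure.restrict_univ]
    have hgint : ∀ (j : ℕ) (w : E → ℝ), Integrable w μ →
        Integrable (fun x => g j (w x)) μ := fun j w hw =>
      (hw.const_mul (a j)).add (integrable_const (b j))
    have hzeroterm : ∀ j ∉ Finset.range (N + 1),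
        ∫⁻ x in B j, ENNReal.ofReal (F N x) ∂μ = 0 := by
      intro j hj
      rw [hBempty j (by simpa using hj), Measure.restrict_empty, lintegral_zero_measure]
    have hsum1 : ∫⁻ x, ENNReal.ofReal (F N x) ∂μ
        = ∑ j ∈ Finset.range (N + 1), ENNReal.ofReal (∫ x in B j, g j (v x) ∂μ) := by
      rw [hpart (fun x => ENNReal.ofReal (F N x)), tsum_eq_sum hzeroterm]
      refine Finset.sum_congr rfl fun j hj => ?_
      have e1 : ∫⁻ x in B j, ENNReal.ofReal (F N x) ∂μ
          = ∫⁻ x in B j, ENNReal.ofReal (g j (v' x)) ∂μ := by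
        refine setLIntegral_congr_fun (hBmeas j) (fun x hx => ?_)
        rw [← (hBmem j x).mp hx, ← hJspec x]
      have hnn : 0 ≤ᵐ[μ.restrict (B j)] fun x => g j (v' x) := by
        refine (ae_restrict_iff' (hBmeas j)).mpr (ae_of_all _ fun x hx => ?_)
        calc (0 : ℝ) ≤ F N x := hF0le N x
          _ = g j (v' x) := by rw [hJspec x, (hBmem j x).mp hx]
      have e2 : ∫⁻ x in B j, ENNReal.ofReal (g j (v' x)) ∂μ
          = ENNReal.ofReal (∫ x in B j, g j (v' x) ∂μ) :=
        (ofReal_integral_eq_lintegral_ofReal ((hgint j v' hv'int).restrict) hnn).symm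
      have e3 : ∫ x in B j, g j (v' x) ∂μ = ∫ x in B j, g j (v x) ∂μ := by
        refine integral_congr_ae (ae_restrict_of_ae (hvv'.mono fun x hx => ?_))
        simp only [hg]
        rw [hx]
      rw [e1, e2, e3]
    have hint : ∀ (j : ℕ) (w : E → ℝ), Integrable w μ → ∫ x in B j, g j (w x) ∂μ
        = a j * (∫ x in B j, w x ∂μ) + b j * (μ (B j)).toReal := by
      intro j w hw
      simp only [hg]
      rw [integral_add ((hw.const_mul (a j)).restrict) (integrable_const (b j)),
        integral_const_mul, integral_const]
      simp only [Measure.real, Measure.restrict_apply_univ, smul_eq_mul]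
      ring
    have hterm : ∀ j : ℕ, Tendsto (fun n => ENNReal.ofReal (∫ x in B j, g j (vs n x) ∂μ))
        atTop (nhds (ENNReal.ofReal (∫ x in B j, g j (v x) ∂μ))) := by
      intro j
      set u : E → ℝ := (B j).indicator fun _ => (1 : ℝ) with hu
      have hum : Measurable u := measurable_const.indicator (hBmeas j)
      have hub : ∃ M : ℝ, ∀ x, |u x| ≤ M := by
        refine ⟨1, fun x => ?_⟩
        rw [hu]
        by_cases hx : x ∈ B j <;> simp [Set.indicator_apply, hx]
      have hmul : ∀ w : E → ℝ, (fun x => w x * u x) = (B j).indicator w := by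
        intro w
        ext x
        rw [hu]
        by_cases hx : x ∈ B j <;> simp [Set.indicator_apply, hx]
      have hw := hweak u hum hub
      rw [hmul v, integral_indicator (hBmeas j)] at hw
      have hw2 : Tendsto (fun n => ∫ x in B j, vs n x ∂μ) atTop
          (nhds (∫ x in B j, v x ∂μ)) := by
        refine Tendsto.congr (fun n => ?_) hw
        rw [hmul (vs n), integral_indicator (hBmeas j)]
      have tend2 : Tendsto
          (fun n => ENNReal.ofReal (a j * (∫ x in B j, vs n x ∂μ) + b j * (μ (B j)).toReal))
          atTop
          (nhds (ENNReal.ofReal (a j * (∫ x in B j, v x ∂μ) + b j * (μ (B j)).toReal))) :=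
        (ENNReal.continuous_ofReal.tendsto _).comp ((hw2.const_mul (a j)).add_const _)
      have e4 : ∀ n, ∫ x in B j, g j (vs n x) ∂μ
          = a j * (∫ x in B j, vs n x ∂μ) + b j * (μ (B j)).toReal := fun n =>
        hint j (vs n) (hvs n)
      have e5 := hint j v hv
      simp only [e4, e5]
      exact tend2
    have hbound : ∀ n, ∑ j ∈ Finset.range (N + 1),
        ENNReal.ofReal (∫ x in B j, g j (vs n x) ∂μ)
        ≤ ∫⁻ x, ENNReal.ofReal (ψ (vs n x)) ∂μ := by
      intro n
      have h1 : ∀ j ∈ Finset.range (N + 1), ENNReal.ofReal (∫ x in B j, g j (vs n x) ∂μ)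
          ≤ ∫⁻ x in B j, ENNReal.ofReal (ψ (vs n x)) ∂μ := by
        intro j _
        calc ENNReal.ofReal (∫ x in B j, g j (vs n x) ∂μ)
            ≤ ∫⁻ x in B j, ENNReal.ofReal (g j (vs n x)) ∂μ :=
              ofReal_integral_le_lint _ _ ((hgint j (vs n) (hvs n)).restrict)
          _ ≤ ∫⁻ x in B j, ENNReal.ofReal (ψ (vs n x)) ∂μ :=
              lintegral_mono fun x => ENNReal.ofReal_le_ofReal (hmin j (vs n x))
      calc ∑ j ∈ Finset.range (N + 1), ENNReal.ofReal (∫ x in B j, g j (vs n x) ∂μ)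
          ≤ ∑ j ∈ Finset.range (N + 1), ∫⁻ x in B j, ENNReal.ofReal (ψ (vs n x)) ∂μ :=
            Finset.sum_le_sum h1
        _ ≤ ∑' j, ∫⁻ x in B j, ENNReal.ofReal (ψ (vs n x)) ∂μ := ENNReal.sum_le_tsum _
        _ = ∫⁻ x, ENNReal.ofReal (ψ (vs n x)) ∂μ := (hpart _).symm
    have htendsum : Tendsto (fun n => ∑ j ∈ Finset.range (N + 1),
        ENNReal.ofReal (∫ x in B j, g j (vs n x) ∂μ)) atTop
        (nhds (∑ j ∈ Finset.range (N + 1), ENNReal.ofReal (∫ x in B j, g j (v x) ∂μ))) :=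
      tendsto_finset_sum _ fun j _ => hterm j
    rw [hsum1, ← htendsum.liminf_eq]
    exact liminf_le_liminf (Eventually.of_forall hbound)
  have hlhs : ∫⁻ x, ENNReal.ofReal (ψ (v x)) ∂μ
      = ⨆ N, ∫⁻ x, ENNReal.ofReal (F N x) ∂μ := by
    have e1 : ∫⁻ x, ENNReal.ofReal (ψ (v x)) ∂μ = ∫⁻ x, ENNReal.ofReal (ψ (v' x)) ∂μ :=
      lintegral_congr_ae (hvv'.mono fun x hx => by dsimp only; rw [hx])
    rw [e1, ← lintegral_iSup (f := fun N x => ENNReal.ofReal (F N x))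
      (fun N => (hFmeas N).ennreal_ofReal)
      (fun i j hij x => ENNReal.ofReal_le_ofReal (hFmono x hij))]
    refine lintegral_congr fun x => ?_
    exact (tendsto_nhds_unique
      (tendsto_atTop_iSup fun i j hij => ENNReal.ofReal_le_ofReal (hFmono x hij))
      ((ENNReal.continuous_ofReal.tendsto _).comp (hFtend x))).symm
  rw [hlhs]
  exact iSup_le hkey
end

section
/- Let ψ : ℝ → [0,∞) be convex with ψ(0)=0, and suppose (H3) holds: there exists c > 0 such that for every r ∈ ℝ there is a subgradient η of ψ at r with |η| ≤ c·(|r| + 1). Define, for ε > 0, the Yosida approximation β^ε(r) := (r − J^ε(r))/ε where J^ε(r) is the unique minimizer of s ↦ (r−s)²/(2ε) + ψ(s). Then there exists a constant C > 0 (depending only on c, e.g. C = 2c²) such that for all r, r' ∈ ℝ and all ε₁, ε₂ > 0: (β^{ε₁}(r) − β^{ε₂}(r'))·(r − r') ≥ −C·(ε₁ + ε₂)·(r² + r'² + 1). -/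
/-- multiplied-form subgradient property of the proximal point -/
lemma subgrad_aux (ψ : ℝ → ℝ) (hconv : ConvexOn ℝ Set.univ ψ) {ε : ℝ} (hε : 0 < ε)
    (r J₀ : ℝ)
    (hmin : ∀ s : ℝ, (r - J₀) ^ 2 / (2 * ε) + ψ J₀ ≤ (r - s) ^ 2 / (2 * ε) + ψ s)
    (u : ℝ) : ε * ψ J₀ ≤ ε * ψ u + (r - J₀) * (J₀ - u) := by
  have h2ε : (0:ℝ) < 2 * ε := by linarith
  -- key inequality for all small t
  have key : ∀ t : ℝ, 0 < t → t ≤ 1 →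
      ε * ψ J₀ ≤ ε * ψ u + (r - J₀) * (J₀ - u) + t * (u - J₀) ^ 2 / 2 := by
    intro t ht ht1
    have hcv := hconv.2 (Set.mem_univ J₀) (Set.mem_univ u)
      (by linarith : (0:ℝ) ≤ 1 - t) ht.le (by ring)
    simp only [smul_eq_mul] at hcv
    have hm := hmin ((1 - t) * J₀ + t * u)
    have hm2 : (r - J₀) ^ 2 + 2 * ε * ψ J₀ ≤
        (r - ((1 - t) * J₀ + t * u)) ^ 2 + 2 * ε * ψ ((1 - t) * J₀ + t * u) := by
      rw [div_add' _ _ _ h2ε.ne', div_add' _ _ _ h2ε.ne', div_le_div_iff_of_pos_right h2ε] at hm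
      linarith
    nlinarith [mul_le_mul_of_nonneg_left hcv h2ε.le, hm2, ht, mul_pos ht hε]
  by_contra hcon
  push_neg at hcon
  set δ : ℝ := ε * ψ J₀ - (ε * ψ u + (r - J₀) * (J₀ - u)) with hδdef
  have hδ : 0 < δ := by simp only [hδdef]; linarith
  set Q : ℝ := (u - J₀) ^ 2 with hQdef
  have hQ : 0 ≤ Q := sq_nonneg _
  set t : ℝ := min 1 (δ / (Q + 1)) with htdef
  have ht : 0 < t := lt_min one_pos (by positivity)
  have ht1 : t ≤ 1 := min_le_left _ _
  have hts : t ≤ δ / (Q + 1) := min_le_right _ _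
  have hcancel : δ / (Q + 1) * (Q + 1) = δ := div_mul_cancel₀ _ (by positivity)
  have htQ : t * Q < 2 * δ := by
    have h1 : t * (Q + 1) ≤ δ / (Q + 1) * (Q + 1) :=
      mul_le_mul_of_nonneg_right hts (by positivity)
    nlinarith
  have := key t ht ht1
  linarith

/-- bound on the multiplied Yosida approximation -/
lemma yosida_bound (ψ : ℝ → ℝ) (hconv : ConvexOn ℝ Set.univ ψ)
    (c : ℝ) (hc : 0 < c)
    (hH3 : ∀ r : ℝ, ∃ η : ℝ, (∀ u : ℝ, ψ r ≤ ψ u + η * (r - u)) ∧ |η| ≤ c * (|r| + 1))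
    {ε : ℝ} (hε : 0 < ε) (r J₀ : ℝ)
    (hmin : ∀ s : ℝ, (r - J₀) ^ 2 / (2 * ε) + ψ J₀ ≤ (r - s) ^ 2 / (2 * ε) + ψ s) :
    |r - J₀| ≤ ε * (c * (|r| + 1)) := by
  have h1 := subgrad_aux ψ hconv hε r J₀ hmin r
  obtain ⟨η, hη, hηb⟩ := hH3 r
  have h2 : ψ r ≤ ψ J₀ + η * (r - J₀) := hη J₀
  have h3 : ε * ψ r ≤ ε * ψ J₀ + ε * (η * (r - J₀)) := by nlinarith
  have h4 : (r - J₀) ^ 2 ≤ ε * (η * (r - J₀)) := by nlinarith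
  have h5 : ε * (η * (r - J₀)) ≤ ε * (c * (|r| + 1)) * |r - J₀| := by
    have : η * (r - J₀) ≤ |η| * |r - J₀| := by
      calc η * (r - J₀) ≤ |η * (r - J₀)| := le_abs_self _
        _ = |η| * |r - J₀| := abs_mul _ _
    have h6 : |η| * |r - J₀| ≤ (c * (|r| + 1)) * |r - J₀| :=
      mul_le_mul_of_nonneg_right hηb (abs_nonneg _)
    nlinarith
  have hK : 0 ≤ ε * (c * (|r| + 1)) := by positivity
  nlinarith [sq_abs (r - J₀), abs_nonneg (r - J₀), h4, h5, hK]

/-- Under the linear-growth assumption (H3) on the subdifferential of `ψ`, the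
cross-monotonicity estimate for Yosida approximations holds with a quadratic
lower bound. -/
theorem stmt_15 (ψ : ℝ → ℝ) (hconv : ConvexOn ℝ Set.univ ψ)
    (hnonneg : ∀ r : ℝ, 0 ≤ ψ r) (hzero : ψ 0 = 0)
    (c : ℝ) (hc : 0 < c)
    (hH3 : ∀ r : ℝ, ∃ η : ℝ, (∀ u : ℝ, ψ r ≤ ψ u + η * (r - u)) ∧ |η| ≤ c * (|r| + 1))
    (J : ℝ → ℝ → ℝ)
    (hJ : ∀ ε : ℝ, 0 < ε → ∀ r s : ℝ,
      (r - J ε r) ^ 2 / (2 * ε) + ψ (J ε r) ≤ (r - s) ^ 2 / (2 * ε) + ψ s) :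
    ∃ C : ℝ, 0 < C ∧ ∀ r r' ε₁ ε₂ : ℝ, 0 < ε₁ → 0 < ε₂ →
      -C * (ε₁ + ε₂) * (r ^ 2 + r' ^ 2 + 1)
        ≤ ((r - J ε₁ r) / ε₁ - (r' - J ε₂ r') / ε₂) * (r - r') := by
  refine ⟨2 * c ^ 2, by positivity, fun r r' ε₁ ε₂ hε₁ hε₂ => ?_⟩
  set J₁ : ℝ := J ε₁ r with hJ₁
  set J₂ : ℝ := J ε₂ r' with hJ₂
  -- rewrite goal without division
  rw [div_sub_div _ _ hε₁.ne' hε₂.ne', div_mul_eq_mul_div, le_div_iff₀ (mul_pos hε₁ hε₂)]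
  -- subgradient facts
  have s1 := subgrad_aux ψ hconv hε₁ r J₁ (hJ ε₁ hε₁ r) J₂
  have s2 := subgrad_aux ψ hconv hε₂ r' J₂ (hJ ε₂ hε₂ r') J₁
  have mono : 0 ≤ (ε₂ * (r - J₁) - ε₁ * (r' - J₂)) * (J₁ - J₂) := by
    nlinarith [mul_le_mul_of_nonneg_left s1 hε₂.le, mul_le_mul_of_nonneg_left s2 hε₁.le]
  have ha := yosida_bound ψ hconv c hc hH3 hε₁ r J₁ (hJ ε₁ hε₁ r)
  have hb := yosida_bound ψ hconv c hc hH3 hε₂ r' J₂ (hJ ε₂ hε₂ r')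
  have habs : |r - J₁| * |r' - J₂| ≤ (ε₁ * (c * (|r| + 1))) * (ε₂ * (c * (|r'| + 1))) :=
    mul_le_mul ha hb (abs_nonneg _) (by positivity)
  have hrr : (|r| + 1) * (|r'| + 1) ≤ 2 * (r ^ 2 + r' ^ 2 + 1) := by
    nlinarith [sq_abs r, sq_abs r', abs_nonneg r, abs_nonneg r',
      sq_nonneg (|r| - |r'|), sq_nonneg (|r| - 1), sq_nonneg (|r'| - 1)]
  have hab2 : (r - J₁) * (r' - J₂) ≤ ε₁ * ε₂ * (2 * c ^ 2 * (r ^ 2 + r' ^ 2 + 1)) := by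
    calc (r - J₁) * (r' - J₂) ≤ |r - J₁| * |r' - J₂| := by rw [← abs_mul]; exact le_abs_self _
      _ ≤ (ε₁ * (c * (|r| + 1))) * (ε₂ * (c * (|r'| + 1))) := habs
      _ ≤ ε₁ * ε₂ * (2 * c ^ 2 * (r ^ 2 + r' ^ 2 + 1)) := by
          have := mul_le_mul_of_nonneg_left hrr
            (by positivity : (0:ℝ) ≤ ε₁ * ε₂ * c ^ 2)
          nlinarith
  have hab3 := mul_le_mul_of_nonneg_left hab2 (by positivity : (0:ℝ) ≤ ε₁ + ε₂)
  nlinarith [mono, hab3, mul_nonneg hε₂.le (sq_nonneg (r - J₁)), mul_nonneg hε₁.le (sq_nonneg (r' - J₂))]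
end

section
/- Let (E,𝓑,μ) be a measure space with μ finite, let ψ : ℝ → [0,∞) be convex with ψ(0)=0, and suppose (H3) holds: there exists c > 0 such that for every r ∈ ℝ there is a subgradient η of ψ at r with |η| ≤ c·(|r| + 1). For ε > 0 let ψ^ε(r) := inf_{s∈ℝ} ((r−s)²/(2ε) + ψ(s)) be the Moreau regularization. Then for every v ∈ L²(μ): 0 ≤ ∫_E (ψ(v) − ψ^ε(v)) dμ ≤ 2c²·ε·(‖v‖²_{L²(μ)} + μ(E)). -/
open MeasureTheory ENNReal

/-- For `v ∈ L²(μ)`, `0 ≤ ∫ (ψ(v) − ψ^ε(v)) dμ ≤ 2c²·ε·(‖v‖²_{L²} + μ(E))`, where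
`ψ^ε` is the Moreau regularization of `ψ`. -/
theorem stmt_16 {E : Type*} [MeasurableSpace E] (μ : Measure E) [IsFiniteMeasure μ]
    (ψ : ℝ → ℝ) (hconv : ConvexOn ℝ Set.univ ψ)
    (hnonneg : ∀ r : ℝ, 0 ≤ ψ r) (hzero : ψ 0 = 0)
    (c : ℝ) (hc : 0 < c)
    (hH3 : ∀ r : ℝ, ∃ η : ℝ, (∀ u : ℝ, ψ r ≤ ψ u + η * (r - u)) ∧ |η| ≤ c * (|r| + 1))
    (ε : ℝ) (hε : 0 < ε)
    (v : E → ℝ) (hv : MemLp v 2 μ) :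
    (0 : ℝ≥0∞) ≤ ∫⁻ x, ENNReal.ofReal
        (ψ (v x) - ⨅ s : ℝ, ((v x - s) ^ 2 / (2 * ε) + ψ s)) ∂μ ∧
    ∫⁻ x, ENNReal.ofReal
        (ψ (v x) - ⨅ s : ℝ, ((v x - s) ^ 2 / (2 * ε) + ψ s)) ∂μ
      ≤ ENNReal.ofReal (2 * c ^ 2 * ε * ((∫ x, (v x) ^ 2 ∂μ) + (μ Set.univ).toReal)) := by
  refine ⟨zero_le, ?_⟩
  -- pointwise bound
  have hpt : ∀ r : ℝ, ψ r - (⨅ s : ℝ, ((r - s) ^ 2 / (2 * ε) + ψ s))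
      ≤ 2 * c ^ 2 * ε * (r ^ 2 + 1) := by
    intro r
    obtain ⟨η, hsub, hηb⟩ := hH3 r
    have hlb : ψ r - ε * η ^ 2 / 2 ≤ ⨅ s : ℝ, ((r - s) ^ 2 / (2 * ε) + ψ s) := by
      refine le_ciInf fun s => ?_
      have h1 : ψ r ≤ ψ s + η * (r - s) := hsub s
      have hkey : (r - s - ε * η) ^ 2 / (2 * ε)
          = (r - s) ^ 2 / (2 * ε) - η * (r - s) + ε * η ^ 2 / 2 := by
        field_simp
        ring
      have h2 : 0 ≤ (r - s - ε * η) ^ 2 / (2 * ε) :=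
        div_nonneg (sq_nonneg _) (by linarith)
      linarith [hkey ▸ h2]
    have habs : η ^ 2 ≤ (c * (|r| + 1)) ^ 2 := by
      rw [← sq_abs η]
      exact pow_le_pow_left₀ (abs_nonneg η) hηb 2
    have : (c * (|r| + 1)) ^ 2 ≤ c ^ 2 * (2 * r ^ 2 + 2) := by
      nlinarith [sq_nonneg (|r| - 1), sq_abs r, abs_nonneg r]
    nlinarith [hlb]
  -- integrable majorant
  have hsq : Integrable (fun x => (v x) ^ 2) μ := by
    simpa [pow_two] using hv.integrable_sq
  have hg : Integrable (fun x => 2 * c ^ 2 * ε * ((v x) ^ 2 + 1)) μ :=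
    (hsq.add (integrable_const 1)).const_mul _
  calc ∫⁻ x, ENNReal.ofReal
        (ψ (v x) - ⨅ s : ℝ, ((v x - s) ^ 2 / (2 * ε) + ψ s)) ∂μ
      ≤ ∫⁻ x, ENNReal.ofReal (2 * c ^ 2 * ε * ((v x) ^ 2 + 1)) ∂μ :=
        lintegral_mono fun x => ENNReal.ofReal_le_ofReal (hpt (v x))
    _ = ENNReal.ofReal (∫ x, 2 * c ^ 2 * ε * ((v x) ^ 2 + 1) ∂μ) := by
        rw [← ofReal_integral_eq_lintegral_ofReal hg]
        exact Filter.Eventually.of_forall fun x => by positivity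
    _ = ENNReal.ofReal (2 * c ^ 2 * ε * ((∫ x, (v x) ^ 2 ∂μ) + (μ Set.univ).toReal)) := by
        rw [integral_const_mul, integral_add hsq (integrable_const 1), integral_const]
        simp [Measure.real]
end
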